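/- (Lemma 3.4) Let P_1, P_2 ∈ ℝ^{n×n} be symmetric matrices, b_1, b_2 ∈ ℝⁿ and e_1, e_2 ∈ ℝ. If Tᵀ [[P_1 − P_2, b_1 − b_2],[(b_1 − b_2)ᵀ, e_1 − e_2]] T = 0, where T is the (n+1)×(2n−1) matrix whose columns are (r_0;1) and the columns of (R̂;0) and (−R̂;0), then xᵀP_1 x + 2 b_1ᵀ x + e_1 = xᵀP_2 x + 2 b_2ᵀ x + e_2 for all x ∈ Σ_0. -/

import Mathlib

open Matrix

noncomputable section

/-- The n×(n−1) matrix R̂ (state dimension is `n+1`, so R̂ has `n` columns):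
first row `(−c₂/c₁, …, −c_n/c₁)`, lower block the identity. -/
def Rhat {n : ℕ} (c : Fin (n+1) → ℝ) : Matrix (Fin (n+1)) (Fin n) ℝ :=
  Matrix.of fun i j =>
    Fin.cases (motive := fun _ => ℝ) (-(c j.succ) / c 0)
      (fun k => if k = j then (1:ℝ) else 0) i

/-- The vector `r₀ = (−f/c₁, 0, …, 0)ᵀ`. -/
def rZero {n : ℕ} (c : Fin (n+1) → ℝ) (f : ℝ) : Fin (n+1) → ℝ :=
  fun i => if i = 0 then -f / c 0 else 0

/-- The symmetric block matrix `[[P, b],[bᵀ, e]]`. -/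
def quadMat {N : Type*} (P : Matrix N N ℝ) (b : N → ℝ) (e : ℝ) :
    Matrix (N ⊕ Unit) (N ⊕ Unit) ℝ :=
  Matrix.fromBlocks P (Matrix.of fun i _ => b i) (Matrix.of fun _ j => b j)
    (Matrix.of fun _ _ => e)

/-- The (n+1)×(2n) matrix with columns `(r₀;1)`, `(u;0)`, the columns of `(R̂;0)`
and the columns of `(−R̂;0)`. -/
def Smat {n : ℕ} (c : Fin (n+1) → ℝ) (f : ℝ) (u : Fin (n+1) → ℝ) :
    Matrix (Fin (n+1) ⊕ Unit) (Unit ⊕ Unit ⊕ Fin n ⊕ Fin n) ℝ :=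
  Matrix.of fun i j =>
    match j with
    | Sum.inl _ => Sum.elim (rZero c f) (fun _ => (1:ℝ)) i
    | Sum.inr (Sum.inl _) => Sum.elim u (fun _ => (0:ℝ)) i
    | Sum.inr (Sum.inr (Sum.inl k)) => Sum.elim (fun i' => Rhat c i' k) (fun _ => (0:ℝ)) i
    | Sum.inr (Sum.inr (Sum.inr k)) => Sum.elim (fun i' => -Rhat c i' k) (fun _ => (0:ℝ)) i

/-- The (n+1)×(2n−1) matrix with columns `(r₀;1)`, the columns of `(R̂;0)`
and the columns of `(−R̂;0)`. -/
def Tmat {n : ℕ} (c : Fin (n+1) → ℝ) (f : ℝ) :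
    Matrix (Fin (n+1) ⊕ Unit) (Unit ⊕ Fin n ⊕ Fin n) ℝ :=
  Matrix.of fun i j =>
    match j with
    | Sum.inl _ => Sum.elim (rZero c f) (fun _ => (1:ℝ)) i
    | Sum.inr (Sum.inl k) => Sum.elim (fun i' => Rhat c i' k) (fun _ => (0:ℝ)) i
    | Sum.inr (Sum.inr k) => Sum.elim (fun i' => -Rhat c i' k) (fun _ => (0:ℝ)) i

/-- `Q >_{ℝ₊^ι} 0` : `zᵀ Q z > 0` for every nonzero entrywise-nonnegative `z`. -/
def PosOnNonnegOrthant {ι : Type*} [Fintype ι] (Q : Matrix ι ι ℝ) : Prop :=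
  ∀ z : ι → ℝ, (∀ j, 0 ≤ z j) → z ≠ 0 → 0 < z ⬝ᵥ Q *ᵥ z

/-- Lemma 3.4: if `Tᵀ [[P₁−P₂, b₁−b₂],[(b₁−b₂)ᵀ, e₁−e₂]] T = 0`, then the two quadratic
functions agree on the hyperplane `Σ₀ = {x | cᵀx + f = 0}`. -/
theorem quadratics_agree_on_hyperplane
    (n : ℕ) (c : Fin (n+1) → ℝ) (hc : c 0 ≠ 0) (f : ℝ)
    (P₁ P₂ : Matrix (Fin (n+1)) (Fin (n+1)) ℝ) (hP₁ : P₁.IsSymm) (hP₂ : P₂.IsSymm)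
    (b₁ b₂ : Fin (n+1) → ℝ) (e₁ e₂ : ℝ)
    (hT : (Tmat c f)ᵀ * quadMat (P₁ - P₂) (b₁ - b₂) (e₁ - e₂) * Tmat c f = 0) :
    ∀ x : Fin (n+1) → ℝ, c ⬝ᵥ x + f = 0 →
      x ⬝ᵥ P₁ *ᵥ x + 2 * (b₁ ⬝ᵥ x) + e₁ = x ⬝ᵥ P₂ *ᵥ x + 2 * (b₂ ⬝ᵥ x) + e₂ := by

  intro x hx
  -- the vector w with T *ᵥ w = (x; 1)
  set w : Unit ⊕ Fin n ⊕ Fin n → ℝ :=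
    Sum.elim (fun _ => 1) (Sum.elim (fun k => x k.succ) (fun _ => 0)) with hw
  have hTw : Tmat c f *ᵥ w = Sum.elim x (fun _ => 1) := by
    funext i
    cases i with
    | inr u =>
      simp [Tmat, Matrix.mulVec, dotProduct, Fintype.sum_sum_type, hw]
    | inl i' =>
      refine Fin.cases ?_ ?_ i'
      · have hx' : c 0 * x 0 + ∑ k : Fin n, c k.succ * x k.succ + f = 0 := by
          rw [dotProduct, Fin.sum_univ_succ] at hx; linarith
        simp only [Tmat, Matrix.mulVec, dotProduct, Fintype.sum_sum_type, hw,
          Matrix.of_apply, Sum.elim_inl, Sum.elim_inr, rZero, Rhat, Fin.cases_zero,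
          if_pos rfl]
        field_simp
        simp only [Finset.univ_unique, Finset.sum_const, Finset.card_singleton, one_smul,
          mul_zero, Finset.sum_const_zero, add_zero, neg_mul, neg_div]
        have hsum : ∑ k : Fin n, -(c k.succ * x k.succ / c 0)
            = -(∑ k : Fin n, c k.succ * x k.succ) / c 0 := by
          rw [neg_div, Finset.sum_div, ← Finset.sum_neg_distrib]
        have hx0 : x 0 = (-f - ∑ k : Fin n, c k.succ * x k.succ) / c 0 := by
          rw [eq_div_iff hc]; linarith
        rw [hx0, hsum]
        simp only [if_true, zero_div, smul_zero, add_zero]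
        ring
      · intro j
        simp only [Tmat, Matrix.mulVec, dotProduct, Fintype.sum_sum_type, hw,
          Matrix.of_apply, Sum.elim_inl, Sum.elim_inr, rZero, Rhat, Fin.cases_succ,
          Fin.succ_ne_zero, if_false]
        simp [Finset.sum_ite_eq']
  have hq : ∀ (P : Matrix (Fin (n+1)) (Fin (n+1)) ℝ) (b : Fin (n+1) → ℝ) (e : ℝ),
      (Sum.elim x (fun _ => (1:ℝ))) ⬝ᵥ quadMat P b e *ᵥ (Sum.elim x (fun _ => 1))
        = x ⬝ᵥ P *ᵥ x + 2 * (b ⬝ᵥ x) + e := by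
    intro P b e
    rw [quadMat, Matrix.fromBlocks_mulVec, sumElim_dotProduct_sumElim]
    have h1 : (Matrix.of fun i (_ : Unit) => b i) *ᵥ (fun _ => (1:ℝ)) = b := by
      funext i; simp [Matrix.mulVec, dotProduct]
    have h2 : (Matrix.of fun (_ : Unit) j => b j) *ᵥ x = fun _ : Unit => b ⬝ᵥ x := by
      funext u; simp [Matrix.mulVec, dotProduct]
    have h3 : (Matrix.of fun (_ _ : Unit) => e) *ᵥ (fun _ => (1:ℝ)) = fun _ : Unit => e := by
      funext u; simp [Matrix.mulVec, dotProduct]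
    simp only [Sum.elim_comp_inl, Sum.elim_comp_inr] at *
    rw [h1, h2, h3]
    simp only [dotProduct_add, dotProduct, dotProduct_comm,
      Finset.univ_unique, Finset.sum_const, Finset.card_singleton, one_smul, one_mul,
      Pi.add_apply, mul_add, Finset.sum_singleton, Finset.sum_add_distrib, mul_comm]
    ring
  have key : w ⬝ᵥ ((Tmat c f)ᵀ * quadMat (P₁ - P₂) (b₁ - b₂) (e₁ - e₂) * Tmat c f) *ᵥ w = 0 := by
    rw [hT]; simp
  rw [show (Tmat c f)ᵀ * quadMat (P₁ - P₂) (b₁ - b₂) (e₁ - e₂) * Tmat c f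
      = (Tmat c f)ᵀ * (quadMat (P₁ - P₂) (b₁ - b₂) (e₁ - e₂) * Tmat c f) by rw [Matrix.mul_assoc],
    ← Matrix.mulVec_mulVec, ← Matrix.mulVec_mulVec, Matrix.dotProduct_mulVec,
    Matrix.vecMul_transpose, hTw] at key
  rw [hq] at key
  have h1 := hq (P₁ - P₂) (b₁ - b₂) (e₁ - e₂)
  -- expand the difference
  have : x ⬝ᵥ (P₁ - P₂) *ᵥ x = x ⬝ᵥ P₁ *ᵥ x - x ⬝ᵥ P₂ *ᵥ x := by
    simp [Matrix.sub_mulVec, dotProduct_sub]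
  rw [this] at key
  have hb : (b₁ - b₂) ⬝ᵥ x = b₁ ⬝ᵥ x - b₂ ⬝ᵥ x := by simp [sub_dotProduct]
  rw [hb] at key
  linarith
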